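/- arXiv:1711.09720 — 3 statements merged into one kernel-verified Lean document; each statement's English description precedes it below -/
import Mathlib

section
/- Let a : ℝ → (0,∞) be even, smooth, satisfying a(ξ) ∼ a(ξ') whenever ξ ∼ ξ', |a'(ξ)| ≲ a(ξ)(1+ξ^2)^{-1/2}, and |a''(ξ)| ≲ a(ξ)(1+ξ^2)^{-1}. Suppose n1, n2, n3, n4 ∈ ℤ with n1+n2+n3+n4 = 0, |n1| ∼ |n2| ∼ |n3| ∼ |n4| ∼ N for a dyadic N, and |n2+n3| ≪ N, |n1+n2| ≪ N. Then |a(n1)n1 + a(n2)n2 + a(n3)n3 + a(n4)n4| ≲ (a(N)/N) |n2+n3| |n1+n2|. -/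
lemma mvt_abs (f : ℝ → ℝ) (hf : Differentiable ℝ f) (x y : ℝ) :
    ∃ c, |c - x| ≤ |y - x| ∧ f y - f x = deriv f c * (y - x) := by
  rcases lt_trichotomy x y with h | h | h
  · obtain ⟨c, hc, hcd⟩ := exists_deriv_eq_slope f h hf.continuous.continuousOn
      hf.differentiableOn
    obtain ⟨hc1, hc2⟩ := hc
    refine ⟨c, ?_, ?_⟩
    · have h1 : |y - x| = y - x := abs_of_pos (by linarith)
      rw [h1, abs_le]; constructor <;> linarith
    · rw [hcd, div_mul_cancel₀]; linarith
  · exact ⟨x, by simp [h], by simp [h]⟩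
  · obtain ⟨c, hc, hcd⟩ := exists_deriv_eq_slope f h hf.continuous.continuousOn
      hf.differentiableOn
    obtain ⟨hc1, hc2⟩ := hc
    refine ⟨c, ?_, ?_⟩
    · have h1 : |y - x| = x - y := abs_of_neg (by linarith) |>.trans (by ring)
      rw [h1, abs_le]; constructor <;> linarith
    · rw [hcd]; have : x - y ≠ 0 := by linarith
      field_simp
      ring

lemma double_mvt (f : ℝ → ℝ) (hf : Differentiable ℝ f) (hf' : Differentiable ℝ (deriv f))
    (x e l : ℝ) :
    ∃ d, |d - x| ≤ |l| + |e| ∧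
      f (x + e + l) - f (x + l) - f (x + e) + f x = deriv (deriv f) d * e * l := by
  set g : ℝ → ℝ := fun y => f (y + e) - f y with hg_def
  have hg : Differentiable ℝ g := (hf.comp (differentiable_id.add_const e)).sub hf
  have hgderiv : ∀ y, deriv g y = deriv f (y + e) - deriv f y := by
    intro y
    have h1 : HasDerivAt (fun y => f (y + e)) (deriv f (y + e)) y := by
      simpa [Function.comp_def] using (hf.differentiableAt.hasDerivAt (x := y + e)).comp y
        ((hasDerivAt_id y).add_const e)
    exact ((h1.sub hf.differentiableAt.hasDerivAt).deriv)
  obtain ⟨c, hc, hceq⟩ := mvt_abs g hg x (x + l)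
  obtain ⟨d, hd, hdeq⟩ := mvt_abs (deriv f) hf' c (c + e)
  simp only [add_sub_cancel_left] at hc hd hceq hdeq
  refine ⟨d, ?_, ?_⟩
  · calc |d - x| ≤ |d - c| + |c - x| := abs_sub_le d c x
      _ ≤ |l| + |e| := by rw [add_comm]; exact add_le_add hc hd
  · rw [hgderiv] at hceq
    simp only [hg_def] at hceq
    rw [hdeq] at hceq
    have : x + l + e = x + e + l := by ring
    rw [this] at hceq
    linarith [hceq]

set_option maxHeartbeats 1000000 in
/-- Subcase 1a of the pointwise multiplier bound: for a positive, even, slowly varying symbol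
`a` with symbol regularity up to second order (constant `Ca`), whenever the four frequencies
are comparable to a dyadic `N = 2^k` with `n1+n2+n3+n4 = 0` and `|n2+n3| ≪ N`, `|n1+n2| ≪ N`,
one has `|Σ a(nᵢ) nᵢ| ≲ (a(N)/N) |n2+n3| |n1+n2|`. -/
theorem multiplier_bound_subcase1a (Ca : ℝ) (hCa : 0 < Ca) :
    ∃ δ > (0 : ℝ), ∃ C > (0 : ℝ), ∀ a : ℝ → ℝ,
      (∀ ξ, 0 < a ξ) →
      (∀ ξ, a (-ξ) = a ξ) →
      ContDiff ℝ 2 a →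
      (∀ ξ ξ' : ℝ, |ξ| ≤ 2 * |ξ'| → |ξ'| ≤ 2 * |ξ| → a ξ ≤ Ca * a ξ') →
      (∀ ξ, |deriv a ξ| ≤ Ca * a ξ / Real.sqrt (1 + ξ ^ 2)) →
      (∀ ξ, |deriv (deriv a) ξ| ≤ Ca * a ξ / (1 + ξ ^ 2)) →
      ∀ (k : ℕ) (n1 n2 n3 n4 : ℤ),
        n1 + n2 + n3 + n4 = 0 →
        ((2 : ℝ) ^ k ≤ |(n1 : ℝ)| ∧ |(n1 : ℝ)| < 2 ^ (k + 1)) →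
        ((2 : ℝ) ^ k ≤ |(n2 : ℝ)| ∧ |(n2 : ℝ)| < 2 ^ (k + 1)) →
        ((2 : ℝ) ^ k ≤ |(n3 : ℝ)| ∧ |(n3 : ℝ)| < 2 ^ (k + 1)) →
        ((2 : ℝ) ^ k ≤ |(n4 : ℝ)| ∧ |(n4 : ℝ)| < 2 ^ (k + 1)) →
        |(n2 : ℝ) + n3| ≤ δ * 2 ^ k →
        |(n1 : ℝ) + n2| ≤ δ * 2 ^ k →
        |a n1 * (n1 : ℝ) + a n2 * (n2 : ℝ) + a n3 * (n3 : ℝ) + a n4 * (n4 : ℝ)|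
          ≤ C * (a ((2 : ℝ) ^ k) / 2 ^ k) * |(n2 : ℝ) + n3| * |(n1 : ℝ) + n2| := by
  refine ⟨1/8, by norm_num, 4 * Ca ^ 3, by positivity, ?_⟩
  intro a hpos heven ha hcomp hd1 hd2 k n1 n2 n3 n4 hsum h1 h2 h3 h4 hl he
  set N : ℝ := (2 : ℝ) ^ k with hN_def
  have hN : (0 : ℝ) < N := by positivity
  have hNsucc : (2 : ℝ) ^ (k + 1) = 2 * N := by rw [hN_def, pow_succ]; ring
  set f : ℝ → ℝ := fun x => a x * x with hf_def
  have hda : Differentiable ℝ a := ha.differentiable (by norm_num)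
  have ha2 : ContDiff ℝ (1 + 1) a := by norm_num; exact ha
  have hda' : Differentiable ℝ (deriv a) :=
    ((contDiff_succ_iff_deriv.mp ha2).2.2).differentiable one_ne_zero
  have hf : Differentiable ℝ f := hda.mul differentiable_id
  have hderiv_f : deriv f = fun x => deriv a x * x + a x := by
    funext x
    have : HasDerivAt f (deriv a x * x + a x * 1) x :=
      (hda.differentiableAt.hasDerivAt.mul (hasDerivAt_id x))
    simpa using this.deriv
  have hf' : Differentiable ℝ (deriv f) := by
    rw [hderiv_f]; exact (hda'.mul differentiable_id).add hda
  obtain ⟨d, hdist, heq⟩ := double_mvt f hf hf' (n1 : ℝ) (-((n1 : ℝ) + n2)) ((n2 : ℝ) + n3)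
  have hsR : (n1 : ℝ) + n2 + n3 + n4 = 0 := by exact_mod_cast hsum
  have e1 : (n1 : ℝ) + -((n1 : ℝ) + n2) + ((n2 : ℝ) + n3) = (n3 : ℝ) := by ring
  have e2 : (n1 : ℝ) + ((n2 : ℝ) + n3) = -(n4 : ℝ) := by linarith
  have e3 : (n1 : ℝ) + -((n1 : ℝ) + n2) = -(n2 : ℝ) := by ring
  rw [e1, e2, e3] at heq
  have fodd : ∀ x : ℝ, f (-x) = -(a x * x) := by
    intro x; simp only [hf_def]; rw [heven]; ring
  rw [fodd, fodd] at heq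
  simp only [hf_def] at heq
  have hkey : a n1 * (n1 : ℝ) + a n2 * n2 + a n3 * n3 + a n4 * n4
      = deriv (deriv f) d * (-((n1 : ℝ) + n2)) * ((n2 : ℝ) + n3) := by linarith
  -- size bounds on d
  have hl' : |(n2 : ℝ) + n3| ≤ N / 8 := by rw [hN_def]; linarith
  have he' : |(n1 : ℝ) + n2| ≤ N / 8 := by rw [hN_def]; linarith
  have habs_neg : |-((n1 : ℝ) + n2)| = |(n1 : ℝ) + n2| := abs_neg _
  rw [habs_neg] at hdist
  have hdist' : |d - (n1 : ℝ)| ≤ N / 4 := by linarith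
  have htri := abs_sub_abs_le_abs_sub (n1 : ℝ) d
  have htri2 := abs_sub_abs_le_abs_sub d (n1 : ℝ)
  rw [abs_sub_comm] at htri
  have hd_lower : 3 * N / 4 ≤ |d| := by
    have := h1.1; linarith
  have hd_upper : |d| ≤ 9 * N / 4 := by
    have := h1.2; rw [hNsucc] at this; linarith
  have hd_pos : (0 : ℝ) < |d| := by linarith
  -- second derivative of f at d
  have hf''d : deriv (deriv f) d = deriv (deriv a) d * d + deriv a d * 1 + deriv a d := by
    rw [hderiv_f]
    exact ((hda'.differentiableAt.hasDerivAt.mul (hasDerivAt_id d)).add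
      hda.differentiableAt.hasDerivAt).deriv
  -- pointwise symbol bounds
  have had_pos : 0 < a d := hpos d
  have hb1 : |deriv (deriv a) d * d| ≤ Ca * a d / |d| := by
    rw [abs_mul]
    have h01 : |deriv (deriv a) d| * |d| ≤ Ca * a d / (1 + d ^ 2) * |d| :=
      mul_le_mul_of_nonneg_right (hd2 d) (abs_nonneg d)
    have h02 : Ca * a d / (1 + d ^ 2) * |d| ≤ Ca * a d / |d| := by
      rw [div_mul_eq_mul_div, div_le_div_iff₀ (by positivity) hd_pos]
      have hdd : |d| * |d| ≤ 1 + d ^ 2 := by nlinarith [sq_abs d]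
      calc Ca * a d * |d| * |d| = Ca * a d * (|d| * |d|) := by ring
        _ ≤ Ca * a d * (1 + d ^ 2) := by
            exact mul_le_mul_of_nonneg_left hdd (by positivity)
    linarith
  have hsqrt : |d| ≤ Real.sqrt (1 + d ^ 2) := by
    rw [← Real.sqrt_sq_eq_abs]
    exact Real.sqrt_le_sqrt (by nlinarith [sq_nonneg d])
  have hb2 : |deriv a d| ≤ Ca * a d / |d| := by
    refine (hd1 d).trans ?_
    gcongr
  have hb3 : |deriv (deriv f) d| ≤ 3 * (Ca * a d / |d|) := by
    rw [hf''d]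
    calc |deriv (deriv a) d * d + deriv a d * 1 + deriv a d|
        ≤ |deriv (deriv a) d * d| + |deriv a d * 1| + |deriv a d| := by
          exact (abs_add_le _ _).trans (add_le_add_left (abs_add_le _ _) _)
      _ ≤ 3 * (Ca * a d / |d|) := by rw [mul_one]; linarith
  have hb4 : Ca * a d / |d| ≤ Ca * a d / (3 * N / 4) := by
    gcongr
  -- comparability chain
  have hM : |3 * N / 2| = 3 * N / 2 := abs_of_pos (by linarith)
  have hNa : |N| = N := abs_of_pos hN
  have s1 : a d ≤ Ca * a (3 * N / 2) := by
    apply hcomp d (3 * N / 2)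
    · rw [hM]; linarith
    · rw [hM]; linarith
  have s2 : a (3 * N / 2) ≤ Ca * a N := by
    apply hcomp
    · rw [hM, hNa]; linarith
    · rw [hM, hNa]; linarith
  have s3 : a d ≤ Ca ^ 2 * a N :=
    s1.trans (by nlinarith [hCa])
  have hfin : |deriv (deriv f) d| ≤ 4 * Ca ^ 3 * (a N / N) := by
    have := hb3.trans (by linarith : 3 * (Ca * a d / |d|) ≤ 3 * (Ca * a d / (3 * N / 4)))
    have h5 : 3 * (Ca * a d / (3 * N / 4)) = 4 * Ca * a d / N := by field_simp
    rw [h5] at this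
    refine this.trans ?_
    rw [div_le_iff₀ hN] at *
    have : 4 * Ca * a d ≤ 4 * Ca * (Ca ^ 2 * a N) :=
      mul_le_mul_of_nonneg_left s3 (by positivity)
    calc 4 * Ca * a d ≤ 4 * Ca * (Ca ^ 2 * a N) := this
      _ = 4 * Ca ^ 3 * (a N / N) * N := by field_simp
  -- conclude
  rw [hkey, abs_mul, abs_mul, habs_neg]
  have hgoal : |deriv (deriv f) d| * |(n1 : ℝ) + n2| * |(n2 : ℝ) + n3|
      ≤ 4 * Ca ^ 3 * (a N / N) * |(n2 : ℝ) + n3| * |(n1 : ℝ) + n2| := by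
    have h6 : |deriv (deriv f) d| * |(n1 : ℝ) + n2| * |(n2 : ℝ) + n3|
        ≤ (4 * Ca ^ 3 * (a N / N)) * |(n1 : ℝ) + n2| * |(n2 : ℝ) + n3| := by
      gcongr
    linarith [h6, mul_comm (|(n1 : ℝ) + n2|) (|(n2 : ℝ) + n3|)]
  linarith [hgoal]
end

section
/- In the High×High×Low×Low frequency regime (|n1| ≤ |n2| ≤ 2^{k3-5} ≤ |n3| ∼ |n4| ∼ 2^{k1*}), if n1+n2+n3+n4 = 0 and n1+n2 ≠ 0, then the resonance function satisfies |n1^3+n2^3+n3^3+n4^3| ∼ |n1+n2| · 2^{2 k1*}. -/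
set_option maxHeartbeats 1000000 in
/-- In the High×High×Low×Low frequency regime
`|n1| ≤ |n2| ≤ 2^{k3-5} ≤ |n3| ∼ |n4| ∼ 2^{k3}` with `n1+n2+n3+n4 = 0` and `n1+n2 ≠ 0`,
the resonance function satisfies `|n1³+n2³+n3³+n4³| ∼ |n1+n2| · 2^{2k3}`. -/
theorem resonance_size_HHLL :
    ∃ c > (0 : ℝ), ∃ C > (0 : ℝ), ∀ (k3 : ℕ) (n1 n2 n3 n4 : ℤ),
      5 ≤ k3 →
      |n1| ≤ |n2| →
      |(n2 : ℝ)| ≤ 2 ^ (k3 - 5) →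
      ((2 : ℝ) ^ k3 ≤ |(n3 : ℝ)| ∧ |(n3 : ℝ)| < 2 ^ (k3 + 1)) →
      ((2 : ℝ) ^ k3 ≤ |(n4 : ℝ)| ∧ |(n4 : ℝ)| < 2 ^ (k3 + 1)) →
      n1 + n2 + n3 + n4 = 0 →
      n1 + n2 ≠ 0 →
      c * |(n1 : ℝ) + n2| * (2 : ℝ) ^ (2 * k3)
          ≤ |(n1 : ℝ) ^ 3 + (n2 : ℝ) ^ 3 + (n3 : ℝ) ^ 3 + (n4 : ℝ) ^ 3| ∧
        |(n1 : ℝ) ^ 3 + (n2 : ℝ) ^ 3 + (n3 : ℝ) ^ 3 + (n4 : ℝ) ^ 3|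
          ≤ C * |(n1 : ℝ) + n2| * (2 : ℝ) ^ (2 * k3) := by
  refine ⟨1, one_pos, 13, by norm_num, ?_⟩
  intro k3 n1 n2 n3 n4 hk h12 h2 h3 h4 hsum hne
  set A : ℝ := (2 : ℝ) ^ k3 with hA
  have hApos : 0 < A := by positivity
  -- |n2| ≤ A/32
  have h2' : |(n2 : ℝ)| ≤ A / 32 := by
    have hpow : (2 : ℝ) ^ (k3 - 5) * 2 ^ 5 = A := by
      rw [← pow_add]; congr 1; omega
    nlinarith [h2]
  have h1' : |(n1 : ℝ)| ≤ A / 32 := by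
    have h12' : |(n1 : ℝ)| ≤ |(n2 : ℝ)| := by
      have h : ((|n1| : ℤ) : ℝ) ≤ ((|n2| : ℤ) : ℝ) := by exact_mod_cast h12
      push_cast at h; exact h
    linarith
  have h3u : |(n3 : ℝ)| < 2 * A := by
    have : ((2 : ℝ) ^ (k3 + 1)) = 2 * A := by rw [pow_succ]; ring
    linarith [h3.2, this ▸ h3.2]
  -- factorization
  have hn4 : (n4 : ℝ) = -((n1 : ℝ) + n2 + n3) := by
    have : n4 = -(n1 + n2 + n3) := by omega
    push_cast [this]; ring
  have hid : (n1 : ℝ) ^ 3 + (n2 : ℝ) ^ 3 + (n3 : ℝ) ^ 3 + (n4 : ℝ) ^ 3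
      = -3 * (((n1 : ℝ) + n2) * (((n1 : ℝ) + n3) * ((n2 : ℝ) + n3))) := by
    rw [hn4]; ring
  have habs : |(n1 : ℝ) ^ 3 + (n2 : ℝ) ^ 3 + (n3 : ℝ) ^ 3 + (n4 : ℝ) ^ 3|
      = 3 * (|(n1 : ℝ) + n2| * (|(n1 : ℝ) + n3| * |(n2 : ℝ) + n3|)) := by
    rw [hid, abs_mul, abs_mul, abs_mul]
    norm_num
  -- bounds on |n1+n3|, |n2+n3|
  have hb1l : 31 / 32 * A ≤ |(n1 : ℝ) + n3| := by
    have := abs_sub_abs_le_abs_sub (n3 : ℝ) (-(n1 : ℝ))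
    simp only [abs_neg, sub_neg_eq_add] at this
    have h3l := h3.1
    rw [add_comm (n1 : ℝ) (n3 : ℝ)] at *
    nlinarith [abs_nonneg ((n3 : ℝ) + n1)]
  have hb2l : 31 / 32 * A ≤ |(n2 : ℝ) + n3| := by
    have := abs_sub_abs_le_abs_sub (n3 : ℝ) (-(n2 : ℝ))
    simp only [abs_neg, sub_neg_eq_add] at this
    have h3l := h3.1
    rw [add_comm (n2 : ℝ) (n3 : ℝ)] at *
    nlinarith [abs_nonneg ((n3 : ℝ) + n2)]
  have hb1u : |(n1 : ℝ) + n3| ≤ 65 / 32 * A := by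
    calc |(n1 : ℝ) + n3| ≤ |(n1 : ℝ)| + |(n3 : ℝ)| := abs_add_le _ _
      _ ≤ 65 / 32 * A := by nlinarith
  have hb2u : |(n2 : ℝ) + n3| ≤ 65 / 32 * A := by
    calc |(n2 : ℝ) + n3| ≤ |(n2 : ℝ)| + |(n3 : ℝ)| := abs_add_le _ _
      _ ≤ 65 / 32 * A := by nlinarith
  have hAsq : (2 : ℝ) ^ (2 * k3) = A * A := by
    rw [hA, ← pow_add]; congr 1; omega
  have h12pos : 0 < |(n1 : ℝ) + n2| := by
    have : ((n1 : ℤ) + n2 : ℤ) ≠ 0 := hne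
    have : (n1 : ℝ) + n2 ≠ 0 := by
      intro h; apply this; exact_mod_cast h
    exact abs_pos.mpr this
  have hXYl : (31 / 32 * A) * (31 / 32 * A) ≤ |(n1 : ℝ) + n3| * |(n2 : ℝ) + n3| :=
    mul_le_mul hb1l hb2l (by positivity) (abs_nonneg _)
  have hXYu : |(n1 : ℝ) + n3| * |(n2 : ℝ) + n3| ≤ (65 / 32 * A) * (65 / 32 * A) :=
    mul_le_mul hb1u hb2u (abs_nonneg _) (by positivity)
  have hAA : (0 : ℝ) ≤ A * A := by positivity
  have hXYl' : (961 / 1024) * (A * A) ≤ |(n1 : ℝ) + n3| * |(n2 : ℝ) + n3| := by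
    linarith [hXYl, (by ring : (31 / 32 * A) * (31 / 32 * A) = (961 / 1024) * (A * A))]
  have hXYu' : |(n1 : ℝ) + n3| * |(n2 : ℝ) + n3| ≤ (4225 / 1024) * (A * A) := by
    linarith [hXYu, (by ring : (65 / 32 * A) * (65 / 32 * A) = (4225 / 1024) * (A * A))]
  have hl : A * A ≤ 3 * (|(n1 : ℝ) + n3| * |(n2 : ℝ) + n3|) := by linarith
  have hu : 3 * (|(n1 : ℝ) + n3| * |(n2 : ℝ) + n3|) ≤ 13 * (A * A) := by linarith
  constructor
  · rw [habs, hAsq]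
    calc 1 * |(n1 : ℝ) + n2| * (A * A) = |(n1 : ℝ) + n2| * (A * A) := by ring
      _ ≤ |(n1 : ℝ) + n2| * (3 * (|(n1 : ℝ) + n3| * |(n2 : ℝ) + n3|)) :=
          mul_le_mul_of_nonneg_left hl (abs_nonneg _)
      _ = 3 * (|(n1 : ℝ) + n2| * (|(n1 : ℝ) + n3| * |(n2 : ℝ) + n3|)) := by ring
  · rw [habs, hAsq]
    calc 3 * (|(n1 : ℝ) + n2| * (|(n1 : ℝ) + n3| * |(n2 : ℝ) + n3|))
        = |(n1 : ℝ) + n2| * (3 * (|(n1 : ℝ) + n3| * |(n2 : ℝ) + n3|)) := by ring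
      _ ≤ |(n1 : ℝ) + n2| * (13 * (A * A)) :=
          mul_le_mul_of_nonneg_left hu (abs_nonneg _)
      _ = 13 * |(n1 : ℝ) + n2| * (A * A) := by ring
end

section
/- Suppose n1,…,n7 ∈ ℤ with n1+n2+n3+n4 = 0, n1+n5+n6+n7 = 0, |n2| ≥ |n3| ≥ |n4|, |n5| ≥ |n6| ≥ |n7|, |n5| ∼ |n6| dyadic K5 ≫ |n2| dyadic K2, and K5^2 ≫ K2^3, all frequencies nonzero in the resonance factors. Then |n2^3+n3^3+n4^3-n5^3-n6^3-n7^3| ≳ K5^2. -/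
/-- Lower bound on the second resonance function (Subcase BI): if `n1+n2+n3+n4 = 0`,
`n1+n5+n6+n7 = 0`, the quadruples are arranged decreasingly, `|n5| ∼ |n6| ≫ |n2|` with
`|n5|² ≫ |n2|³`, and the resonance factors are nonzero, then
`|n2³+n3³+n4³-n5³-n6³-n7³| ≳ |n5|²`. -/
theorem second_resonance_lower_bound :
    ∃ c > (0 : ℝ), ∃ A : ℝ, 1 ≤ A ∧ ∀ n1 n2 n3 n4 n5 n6 n7 : ℤ,
      n1 + n2 + n3 + n4 = 0 →
      n1 + n5 + n6 + n7 = 0 →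
      |n3| ≤ |n2| → |n4| ≤ |n3| →
      |n6| ≤ |n5| → |n7| ≤ |n6| →
      |n5| ≤ 2 * |n6| →
      (|(n5 : ℝ)| ≥ A * |(n2 : ℝ)|) →
      (|(n5 : ℝ)| ^ 2 ≥ A * |(n2 : ℝ)| ^ 3) →
      (n1 + n2) * (n1 + n3) * (n2 + n3) ≠ 0 →
      (n1 + n5) * (n1 + n6) * (n5 + n6) ≠ 0 →
      c * |(n5 : ℝ)| ^ 2
        ≤ |(n2 : ℝ) ^ 3 + (n3 : ℝ) ^ 3 + (n4 : ℝ) ^ 3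
            - (n5 : ℝ) ^ 3 - (n6 : ℝ) ^ 3 - (n7 : ℝ) ^ 3| := by
  refine ⟨3/16, by norm_num, 512, by norm_num, ?_⟩
  intro n1 n2 n3 n4 n5 n6 n7 hs1 hs2 h32 h43 h65 h76 h56 hA1 hA2 hP2 hP5
  -- real casts of hypotheses
  have hs1r : (n1 : ℝ) + n2 + n3 + n4 = 0 := by exact_mod_cast hs1
  have hs2r : (n1 : ℝ) + n5 + n6 + n7 = 0 := by exact_mod_cast hs2
  have h32r : |(n3 : ℝ)| ≤ |(n2 : ℝ)| := by exact_mod_cast h32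
  have h43r : |(n4 : ℝ)| ≤ |(n3 : ℝ)| := by exact_mod_cast h43
  have h65r : |(n6 : ℝ)| ≤ |(n5 : ℝ)| := by exact_mod_cast h65
  have h56r : |(n5 : ℝ)| ≤ 2 * |(n6 : ℝ)| := by exact_mod_cast h56
  -- n1 is small: |n1| ≤ 3|n2|
  have hn1 : |(n1 : ℝ)| ≤ 3 * |(n2 : ℝ)| := by
    have : (n1 : ℝ) = -(n2 + n3 + n4) := by linarith
    rw [this, abs_neg]
    calc |(n2 : ℝ) + n3 + n4| ≤ |(n2 : ℝ)| + |(n3 : ℝ)| + |(n4 : ℝ)| := by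
          exact (abs_add_le _ _).trans (by gcongr; exact abs_add_le _ _)
      _ ≤ 3 * |(n2 : ℝ)| := by linarith
  have hn2small : |(n2 : ℝ)| ≤ |(n5 : ℝ)| / 512 := by linarith
  have hn5pos : (1 : ℝ) ≤ |(n5 : ℝ)| := by
    rcases eq_or_ne n5 0 with h | h
    · subst h
      simp at h65
      simp [h65] at hP5
    · have h1 : (1 : ℤ) ≤ |n5| := Int.one_le_abs (by simpa using h)
      exact_mod_cast h1
  -- lower bounds on the big resonance factors
  have hf1 : |(n5 : ℝ)| / 2 ≤ |(n1 : ℝ) + n5| := by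
    have := abs_sub_abs_le_abs_sub (n5 : ℝ) (-(n1 : ℝ))
    simp only [abs_neg, sub_neg_eq_add] at this
    calc |(n5 : ℝ)| / 2 ≤ |(n5 : ℝ)| - |(n1 : ℝ)| := by linarith
      _ ≤ |(n5 : ℝ) + n1| := this
      _ = |(n1 : ℝ) + n5| := by ring_nf
  have hf2 : |(n5 : ℝ)| / 4 ≤ |(n1 : ℝ) + n6| := by
    have := abs_sub_abs_le_abs_sub (n6 : ℝ) (-(n1 : ℝ))
    simp only [abs_neg, sub_neg_eq_add] at this
    calc |(n5 : ℝ)| / 4 ≤ |(n6 : ℝ)| - |(n1 : ℝ)| := by linarith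
      _ ≤ |(n6 : ℝ) + n1| := this
      _ = |(n1 : ℝ) + n6| := by ring_nf
  have hf3 : (1 : ℝ) ≤ |(n5 : ℝ) + n6| := by
    have h : n5 + n6 ≠ 0 := fun h => hP5 (by rw [h]; ring)
    have h1 : (1 : ℤ) ≤ |n5 + n6| := Int.one_le_abs h
    have h2 : (1 : ℝ) ≤ |((n5 + n6 : ℤ) : ℝ)| := by exact_mod_cast h1
    push_cast at h2
    exact h2
  -- lower bound on |P5|
  have hP5lb : |(n5 : ℝ)| ^ 2 / 8 ≤ |((n1 : ℝ) + n5) * ((n1 : ℝ) + n6) * ((n5 : ℝ) + n6)| := by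
    rw [abs_mul, abs_mul]
    have h1 : (0 : ℝ) ≤ |(n5 : ℝ)| / 2 := by positivity
    have h2 : (0 : ℝ) ≤ |(n5 : ℝ)| / 4 := by positivity
    calc |(n5 : ℝ)| ^ 2 / 8 = (|(n5 : ℝ)| / 2) * (|(n5 : ℝ)| / 4) * 1 := by ring
      _ ≤ |(n1 : ℝ) + n5| * |(n1 : ℝ) + n6| * |(n5 : ℝ) + n6| :=
          mul_le_mul (mul_le_mul hf1 hf2 h2 (abs_nonneg _)) hf3
            (by norm_num) (by positivity)
  -- upper bound on |P2|
  have hP2ub : |((n1 : ℝ) + n2) * ((n1 : ℝ) + n3) * ((n2 : ℝ) + n3)| ≤ 32 * |(n2 : ℝ)| ^ 3 := by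
    rw [abs_mul, abs_mul]
    have b1 : |(n1 : ℝ) + n2| ≤ 4 * |(n2 : ℝ)| := (abs_add_le _ _).trans (by linarith)
    have b2 : |(n1 : ℝ) + n3| ≤ 4 * |(n2 : ℝ)| := (abs_add_le _ _).trans (by linarith)
    have b3 : |(n2 : ℝ) + n3| ≤ 2 * |(n2 : ℝ)| := (abs_add_le _ _).trans (by linarith)
    calc |(n1 : ℝ) + n2| * |(n1 : ℝ) + n3| * |(n2 : ℝ) + n3|
        ≤ (4 * |(n2 : ℝ)|) * (4 * |(n2 : ℝ)|) * (2 * |(n2 : ℝ)|) := by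
          gcongr
      _ = 32 * |(n2 : ℝ)| ^ 3 := by ring
  -- algebraic identity
  have hid : (n2 : ℝ) ^ 3 + (n3 : ℝ) ^ 3 + (n4 : ℝ) ^ 3 - (n5 : ℝ) ^ 3 - (n6 : ℝ) ^ 3 - (n7 : ℝ) ^ 3
      = 3 * (((n1 : ℝ) + n5) * ((n1 : ℝ) + n6) * ((n5 : ℝ) + n6))
        - 3 * (((n1 : ℝ) + n2) * ((n1 : ℝ) + n3) * ((n2 : ℝ) + n3)) := by
    have e4 : (n4 : ℝ) = -(n1 + n2 + n3) := by linarith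
    have e7 : (n7 : ℝ) = -(n1 + n5 + n6) := by linarith
    rw [e4, e7]; ring
  rw [hid]
  have habs : ∀ x : ℝ, |3 * x| = 3 * |x| := fun x => by
    rw [abs_mul]; norm_num
  have key := abs_sub_abs_le_abs_sub
    (3 * (((n1 : ℝ) + n5) * ((n1 : ℝ) + n6) * ((n5 : ℝ) + n6)))
    (3 * (((n1 : ℝ) + n2) * ((n1 : ℝ) + n3) * ((n2 : ℝ) + n3)))
  rw [habs, habs] at key
  have hcube : 96 * |(n2 : ℝ)| ^ 3 ≤ (3/16) * |(n5 : ℝ)| ^ 2 := by nlinarith [abs_nonneg (n2 : ℝ)]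
  linarith [key, hP5lb, hP2ub, hcube]
end
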